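/- Suppose ν_q(s) > 0 whenever μ_q(s) > 0, for every q ∈ Q and s ∈ S, and suppose the set {t ≥ 1 : μ_{q_t} ≠ ν_{q_t}} is infinite. Then the partial sums Σ_{t=1}^{T} log( ν_{q_t}(s_t)/μ_{q_t}(s_t) ) tend to −∞ almost surely as T → ∞ (almost surely μ_{q_t}(s_t) > 0 for every t, so the terms are well defined). -/

import Mathlib

open MeasureTheory Filter

private lemma sqrt_mul_lt_add_div_two {a b : ℝ} (ha : 0 ≤ a) (hb : 0 ≤ b) (hab : a ≠ b) :
    Real.sqrt (a * b) < (a + b) / 2 := by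
  have hs : Real.sqrt a ≠ Real.sqrt b := fun h => hab ((Real.sqrt_inj ha hb).1 h)
  have h1 : 0 < (Real.sqrt a - Real.sqrt b) ^ 2 := sq_pos_iff.2 (sub_ne_zero.mpr hs)
  rw [Real.sqrt_mul ha b]
  nlinarith [Real.sq_sqrt ha, Real.sq_sqrt hb]

private lemma sqrt_mul_le_add_div_two' {a b : ℝ} (ha : 0 ≤ a) (hb : 0 ≤ b) :
    Real.sqrt (a * b) ≤ (a + b) / 2 := by
  rw [Real.sqrt_mul ha b]
  nlinarith [Real.sq_sqrt ha, Real.sq_sqrt hb, sq_nonneg (Real.sqrt a - Real.sqrt b)]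

private lemma integral_comp_finite {S : Type*} [Fintype S] [MeasurableSpace S]
    [MeasurableSingletonClass S] {Ω : Type*} [MeasurableSpace Ω] (P : Measure Ω)
    [IsFiniteMeasure P] (X : Ω → S) (hX : Measurable X) (f : S → ℝ) :
    Integrable (fun ω => f (X ω)) P ∧
      ∫ ω, f (X ω) ∂P = ∑ x, (P {ω | X ω = x}).toReal * f x := by
  classical
  have hmeas : ∀ x : S, MeasurableSet (X ⁻¹' {x}) := fun x => hX (measurableSet_singleton x)
  have hrepr : (fun ω => f (X ω)) =
      fun ω => ∑ x : S, Set.indicator (X ⁻¹' {x}) (fun _ => f x) ω := by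
    funext ω
    rw [Finset.sum_eq_single (X ω)]
    · simp
    · intro x _ hx
      exact Set.indicator_of_notMem (by simpa using (Ne.symm hx)) _
    · intro h; exact absurd (Finset.mem_univ _) h
  have hint : ∀ x : S, Integrable (Set.indicator (X ⁻¹' {x}) (fun _ => f x)) P :=
    fun x => (integrable_const (f x)).indicator (hmeas x)
  constructor
  · rw [hrepr]; exact integrable_finset_sum _ fun x _ => hint x
  · rw [hrepr, integral_finset_sum _ fun x _ => hint x]
    refine Finset.sum_congr rfl fun x _ => ?_
    rw [integral_indicator_const (f x) (hmeas x)]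
    · rfl

/-- **Divergence of log-likelihood partial sums along a path.** `S` and `Q` are finite nonempty
sets; for each `q ∈ Q`, `μ_q` and `ν_q` are probability mass functions on `S`; `(q_t)_{t ≥ 1}` is
a fixed deterministic path in `Q`; the observations `(s_t)_{t ≥ 1}` are mutually independent with
`s_t` distributed according to `μ_{q_t}`. Suppose `ν_q(s) > 0` whenever `μ_q(s) > 0`, and that
`μ_{q_t} ≠ ν_{q_t}` for infinitely many `t ≥ 1`. Then almost surely `μ_{q_t}(s_t) > 0` for every
`t ≥ 1` (so the terms are well defined) and the partial sums
`Σ_{t=1}^{T} log(ν_{q_t}(s_t)/μ_{q_t}(s_t))` tend to `−∞` as `T → ∞`. -/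
theorem log_likelihood_partial_sums_tendsto_atBot
    {S : Type*} [Fintype S] [Nonempty S] [MeasurableSpace S] [MeasurableSingletonClass S]
    {Q : Type*} [Fintype Q] [Nonempty Q]
    (μ ν : Q → S → ℝ)
    (hμ_nonneg : ∀ q s, 0 ≤ μ q s) (hμ_sum : ∀ q, ∑ s, μ q s = 1)
    (hν_nonneg : ∀ q s, 0 ≤ ν q s) (hν_sum : ∀ q, ∑ s, ν q s = 1)
    (habs : ∀ q s, 0 < μ q s → 0 < ν q s)
    (q : ℕ → Q)
    (hinf : {t : ℕ | 1 ≤ t ∧ μ (q t) ≠ ν (q t)}.Infinite)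
    {Ω : Type*} [MeasurableSpace Ω] (P : Measure Ω) [IsProbabilityMeasure P]
    (s : ℕ → Ω → S)
    (hs_meas : ∀ t, 1 ≤ t → Measurable (s t))
    (hs_law : ∀ t, 1 ≤ t → ∀ x, P {ω | s t ω = x} = ENNReal.ofReal (μ (q t) x))
    (hs_indep : ProbabilityTheory.iIndepFun
      (m := fun _ : {t : ℕ // 1 ≤ t} => (inferInstance : MeasurableSpace S))
      (fun t => s t.1) P) :
    ∀ᵐ ω ∂P, (∀ t, 1 ≤ t → 0 < μ (q t) (s t ω)) ∧
      Tendsto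
        (fun T : ℕ => ∑ t ∈ Finset.Icc 1 T, Real.log (ν (q t) (s t ω) / μ (q t) (s t ω)))
        atTop atBot := by
  classical
  set p : ℕ → Prop := fun t => 1 ≤ t ∧ μ (q t) ≠ ν (q t) with hp_def
  have hinf' : (setOf p).Infinite := hinf
  set X : ℕ → Ω → ℝ := fun t ω => Real.log (ν (q t) (s t ω) / μ (q t) (s t ω)) with hX_def
  set g : ℕ → S → ℝ := fun t x => Real.exp (Real.log (ν (q t) x / μ (q t) x) / 2) with hg_def
  -- law of s t
  have hlaw : ∀ t, 1 ≤ t → ∀ x, (P {ω | s t ω = x}).toReal = μ (q t) x := by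
    intro t ht x; rw [hs_law t ht x, ENNReal.toReal_ofReal (hμ_nonneg _ _)]
  have hint : ∀ t, 1 ≤ t → ∀ f : S → ℝ, Integrable (fun ω => f (s t ω)) P ∧
      ∫ ω, f (s t ω) ∂P = ∑ x, μ (q t) x * f x := by
    intro t ht f
    obtain ⟨h1, h2⟩ := integral_comp_finite P (s t) (hs_meas t ht) f
    refine ⟨h1, h2.trans (Finset.sum_congr rfl fun x _ => by rw [hlaw t ht x])⟩
  -- a.s. positivity
  have hpos : ∀ᵐ ω ∂P, ∀ t, 1 ≤ t → 0 < μ (q t) (s t ω) := by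
    rw [ae_all_iff]
    intro t
    by_cases ht : 1 ≤ t
    · rw [ae_iff]
      have hsub : {ω | ¬(1 ≤ t → 0 < μ (q t) (s t ω))} ⊆
          ⋃ x ∈ (Finset.univ.filter (fun x : S => μ (q t) x = 0) : Finset S),
            {ω | s t ω = x} := by
        intro ω hω
        simp only [Set.mem_setOf_eq, Classical.not_imp, not_lt] at hω
        have h0 : μ (q t) (s t ω) = 0 := le_antisymm hω.2 (hμ_nonneg _ _)
        exact Set.mem_biUnion (Finset.mem_filter.2 ⟨Finset.mem_univ _, h0⟩) rfl
      refine le_antisymm ?_ (zero_le)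
      calc P _ ≤ P (⋃ x ∈ (Finset.univ.filter (fun x : S => μ (q t) x = 0) : Finset S),
            {ω | s t ω = x}) := measure_mono hsub
        _ ≤ ∑ x ∈ Finset.univ.filter (fun x : S => μ (q t) x = 0), P {ω | s t ω = x} :=
            measure_biUnion_finset_le _ _
        _ = 0 := Finset.sum_eq_zero fun x hx => by
            rw [hs_law t ht x, (Finset.mem_filter.1 hx).2, ENNReal.ofReal_zero]
    · exact ae_of_all _ fun ω h => absurd h ht
  -- Bhattacharyya coefficient
  set B : Q → ℝ := fun c => ∑ x, Real.sqrt (μ c x * ν c x) with hB_def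
  have hB_lt : ∀ c, μ c ≠ ν c → B c < 1 := by
    intro c hc
    obtain ⟨x0, hx0⟩ := Function.ne_iff.1 hc
    have : B c < ∑ x, (μ c x + ν c x) / 2 := by
      refine Finset.sum_lt_sum (fun x _ => sqrt_mul_le_add_div_two' (hμ_nonneg _ _)
        (hν_nonneg _ _)) ⟨x0, Finset.mem_univ _, sqrt_mul_lt_add_div_two (hμ_nonneg _ _)
          (hν_nonneg _ _) hx0⟩
    calc B c < ∑ x, (μ c x + ν c x) / 2 := this
      _ = 1 := by rw [← Finset.sum_div, Finset.sum_add_distrib, hμ_sum, hν_sum]; norm_num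
  -- the uniform constant r
  have hQne : ∃ c : Q, μ c ≠ ν c := by
    obtain ⟨t, ht⟩ := hinf'.nonempty; exact ⟨q t, ht.2⟩
  set Dq : Finset Q := Finset.univ.filter (fun c => μ c ≠ ν c) with hDq
  have hDqne : Dq.Nonempty := ⟨hQne.choose, by simp [hDq, hQne.choose_spec]⟩
  set r : ℝ := max (Dq.sup' hDqne B) (1 / 2) with hr_def
  have hr1 : r < 1 := by
    refine max_lt ?_ (by norm_num)
    rw [Finset.sup'_lt_iff]
    intro c hc
    exact hB_lt c (by simpa [hDq] using hc)
  have hr0 : 0 < r := lt_of_lt_of_le one_half_pos (le_max_right _ _)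
  have hrB : ∀ c, μ c ≠ ν c → B c ≤ r := fun c hc =>
    le_trans (Finset.le_sup' B (by simp [hDq, hc])) (le_max_left _ _)
  -- expectation bound
  have hgE_nonneg : ∀ t, 0 ≤ ∫ ω, g t (s t ω) ∂P :=
    fun t => integral_nonneg fun ω => (Real.exp_pos _).le
  have hgbound : ∀ t, p t → ∫ ω, g t (s t ω) ∂P ≤ r := by
    intro t ht
    rw [(hint t ht.1 (g t)).2]
    refine le_trans ?_ (hrB _ ht.2)
    rw [hB_def]
    refine Finset.sum_le_sum fun x _ => ?_
    by_cases hx : 0 < μ (q t) x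
    · have hv : 0 < ν (q t) x := habs _ _ hx
      have hdiv : 0 < ν (q t) x / μ (q t) x := div_pos hv hx
      have hgx : g t x = Real.sqrt (ν (q t) x / μ (q t) x) := by
        rw [hg_def, Real.sqrt_eq_rpow, Real.rpow_def_of_pos hdiv]
        ring_nf
      have hmulnu : μ (q t) x * ν (q t) x = μ (q t) x ^ 2 * (ν (q t) x / μ (q t) x) := by
        field_simp
      rw [hgx, hmulnu, Real.sqrt_mul (sq_nonneg _), Real.sqrt_sq hx.le]
    · have hx0 : μ (q t) x = 0 := le_antisymm (not_lt.1 hx) (hμ_nonneg _ _)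
      rw [hx0]
      simpa using Real.sqrt_nonneg (0 * ν (q t) x)
  -- independence of the g-transformed variables
  set Y : {t : ℕ // 1 ≤ t} → Ω → ℝ := fun i ω => g i.1 (s i.1 ω) with hY_def
  have hY_meas : ∀ i, Measurable (Y i) :=
    fun i => (measurable_of_finite (g i.1)).comp (hs_meas i.1 i.2)
  have hY_indep : ProbabilityTheory.iIndepFun
      (m := fun _ => (inferInstance : MeasurableSpace ℝ)) Y P :=
    hs_indep.comp (fun i => g i.1) (fun i => measurable_of_finite _)
  have hY_int : ∀ i, Integrable (Y i) P := fun i => (hint i.1 i.2 (g i.1)).1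
  have hprod : ∀ G : Finset {t : ℕ // 1 ≤ t},
      Integrable (∏ i ∈ G, Y i) P ∧
        ∫ ω, (∏ i ∈ G, Y i) ω ∂P = ∏ i ∈ G, ∫ ω, Y i ω ∂P := by
    intro G
    induction G using Finset.induction_on with
    | empty =>
      constructor
      · simp only [Finset.prod_empty]; exact integrable_const (1 : ℝ)
      · simp
    | insert a G ha ih =>
      have hindep : ProbabilityTheory.IndepFun (∏ i ∈ G, Y i) (Y a) P :=
        hY_indep.indepFun_finset_prod_of_notMem hY_meas ha
      rw [Finset.prod_insert ha]
      constructor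
      · exact hindep.symm.integrable_mul (hY_int a) ih.1
      · rw [Finset.prod_insert ha, hindep.symm.integral_mul_eq_mul_integral (hY_int a).1 ih.1.1, ih.2]
  -- the enumeration of the divergence times
  set m : ℕ → ℕ := fun k => Nat.nth p k with hm_def
  have hm_mem : ∀ k, p (m k) := fun k => Nat.nth_mem_of_infinite hinf' k
  have hm_inj : Function.Injective m := Nat.nth_injective hinf'
  set e : ℕ → {t : ℕ // 1 ≤ t} := fun k => ⟨m k, (hm_mem k).1⟩ with he_def
  have he_inj : Function.Injective e := fun a b hab => hm_inj (congrArg Subtype.val hab)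
  -- Chernoff constants
  set ε : ℝ := -Real.log r with hε_def
  have hε_pos : 0 < ε := neg_pos.2 (Real.log_neg hr0 hr1)
  set c : ℝ := Real.exp (Real.log r / 2) with hc_def
  have hc_pos : 0 < c := Real.exp_pos _
  have hc_lt : c < 1 := by
    rw [hc_def, Real.exp_lt_one_iff]
    exact div_neg_of_neg_of_pos (Real.log_neg hr0 hr1) two_pos
  have hcc : c * c = r := by
    rw [hc_def, ← Real.exp_add, add_halves]
    exact Real.exp_log hr0
  -- the bad events
  set A : ℕ → Set Ω := fun k => {ω | -(ε * k) ≤ ∑ j ∈ Finset.range k, X (m j) ω} with hA_def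
  have hPA : ∀ k, P (A k) ≤ ENNReal.ofReal (c ^ k) := by
    intro k
    set Gk : Ω → ℝ := fun ω => ∏ j ∈ Finset.range k, g (m j) (s (m j) ω) with hGk_def
    have hGfun : (∏ i ∈ (Finset.range k).image e, Y i) = Gk := by
      funext ω
      rw [Finset.prod_apply, Finset.prod_image (fun a _ b _ h => he_inj h)]
    obtain ⟨hGint0, hGeq0⟩ := hprod ((Finset.range k).image e)
    rw [hGfun] at hGint0 hGeq0
    have hGle : ∫ ω, Gk ω ∂P ≤ r ^ k := by
      rw [hGeq0, Finset.prod_image (fun a _ b _ h => he_inj h)]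
      calc (∏ j ∈ Finset.range k, ∫ ω, Y (e j) ω ∂P)
          ≤ ∏ j ∈ Finset.range k, r :=
            Finset.prod_le_prod (fun j _ => hgE_nonneg _)
              (fun j _ => hgbound (m j) (hm_mem j))
        _ = r ^ k := by rw [Finset.prod_const, Finset.card_range]
    have hsub : A k ⊆ {ω | c ^ k ≤ Gk ω} := by
      intro ω hω
      simp only [hA_def, Set.mem_setOf_eq] at hω ⊢
      have h1 : Gk ω = Real.exp ((∑ j ∈ Finset.range k, X (m j) ω) / 2) := by
        rw [Finset.sum_div, Real.exp_sum]
      have h2 : c ^ k = Real.exp ((k : ℝ) * (Real.log r / 2)) := by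
        rw [Real.exp_nat_mul]
      rw [h1, h2]
      apply Real.exp_le_exp.2
      have hlogr : Real.log r = -ε := by rw [hε_def]; ring
      rw [hlogr]
      nlinarith
    have hmark := mul_meas_ge_le_integral_of_nonneg
      (ae_of_all P fun ω => Finset.prod_nonneg fun j _ => (Real.exp_pos _).le)
      hGint0 (c ^ k)
    have hckpos : (0:ℝ) < c ^ k := pow_pos hc_pos k
    have h3 : (P (A k)).toReal ≤ (P {ω | c ^ k ≤ Gk ω}).toReal :=
      ENNReal.toReal_mono (measure_ne_top P _) (measure_mono hsub)
    have h5 : r ^ k / c ^ k = c ^ k := by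
      rw [← hcc, mul_pow]
      field_simp
    have h4 : (P {ω | c ^ k ≤ Gk ω}).toReal ≤ r ^ k / c ^ k := by
      rw [le_div_iff₀ hckpos]
      calc (P {ω | c ^ k ≤ Gk ω}).toReal * c ^ k
          = c ^ k * (P {ω | c ^ k ≤ Gk ω}).toReal := by ring
        _ ≤ ∫ ω, Gk ω ∂P := hmark
        _ ≤ r ^ k := hGle
    calc P (A k) = ENNReal.ofReal (P (A k)).toReal :=
          (ENNReal.ofReal_toReal (measure_ne_top P _)).symm
      _ ≤ ENNReal.ofReal (c ^ k) :=
          ENNReal.ofReal_le_ofReal (le_trans h3 (h4.trans (le_of_eq h5)))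
  have hsum_ne : (∑' k, P (A k)) ≠ ⊤ := by
    have hsummable : Summable (fun k : ℕ => c ^ k) :=
      summable_geometric_of_lt_one hc_pos.le hc_lt
    refine ne_top_of_le_ne_top ?_ (ENNReal.tsum_le_tsum hPA)
    rw [← ENNReal.ofReal_tsum_of_nonneg (fun k => (pow_pos hc_pos k).le) hsummable]
    exact ENNReal.ofReal_ne_top
  have hBC := ae_eventually_notMem hsum_ne
  -- assemble
  filter_upwards [hpos, hBC] with ω hω hBCω
  refine ⟨fun t ht => hω t ht, ?_⟩
  have hsum_eq : ∀ T, ∑ t ∈ Finset.Icc 1 T, X t ω =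
      ∑ j ∈ Finset.range (Nat.count p (T + 1)), X (m j) ω := by
    intro T
    have h1 : ∑ t ∈ (Finset.Icc 1 T).filter p, X t ω = ∑ t ∈ Finset.Icc 1 T, X t ω := by
      refine Finset.sum_filter_of_ne fun t htmem hne => ?_
      by_contra hpt
      apply hne
      have ht1 : 1 ≤ t := (Finset.mem_Icc.1 htmem).1
      have heq : μ (q t) = ν (q t) := by
        by_contra h; exact hpt ⟨ht1, h⟩
      rw [hX_def]
      simp only [← heq, div_self (ne_of_gt (hω t ht1)), Real.log_one]
    have h2 : (Finset.Icc 1 T).filter p = (Finset.range (Nat.count p (T + 1))).image m := by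
      ext t
      simp only [Finset.mem_filter, Finset.mem_Icc, Finset.mem_image, Finset.mem_range]
      constructor
      · rintro ⟨⟨ht1, htT⟩, hpt⟩
        refine ⟨Nat.count p t, ?_, Nat.nth_count hpt⟩
        calc Nat.count p t < Nat.count p (t + 1) := by
              rw [Nat.count_succ, if_pos hpt]; omega
          _ ≤ Nat.count p (T + 1) := Nat.count_monotone p (by omega)
      · rintro ⟨j, hj, rfl⟩
        have hpm := hm_mem j
        have hlt : m j < T + 1 := Nat.nth_lt_of_lt_count hj
        exact ⟨⟨hpm.1, by omega⟩, hpm⟩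
    rw [← h1, h2, Finset.sum_image (fun a _ b _ h => hm_inj h)]
  have hcount : Tendsto (fun T => Nat.count p (T + 1)) atTop atTop := by
    refine tendsto_atTop_atTop.2 fun b => ⟨Nat.nth p b, fun T hT => ?_⟩
    calc b ≤ b + 1 := Nat.le_succ b
      _ = Nat.count p (Nat.nth p b + 1) := (Nat.count_nth_succ_of_infinite hinf' b).symm
      _ ≤ Nat.count p (T + 1) := Nat.count_monotone p (by omega)
  have hφ : ∀ b : ℝ, ∀ᶠ k in atTop, (∑ j ∈ Finset.range k, X (m j) ω) ≤ b := by
    intro b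
    obtain ⟨K, hK⟩ := eventually_atTop.1 hBCω
    obtain ⟨K2, hK2⟩ : ∃ K2 : ℕ, -b / ε ≤ K2 := exists_nat_ge _
    filter_upwards [eventually_ge_atTop K, eventually_ge_atTop K2] with k h1 h2
    have hnot := hK k h1
    simp only [hA_def, Set.mem_setOf_eq, not_le] at hnot
    have hk2 : (K2 : ℝ) ≤ (k : ℝ) := Nat.cast_le.2 h2
    have hbK : -b ≤ ε * K2 := by
      rw [div_le_iff₀ hε_pos] at hK2; linarith
    nlinarith
  have hfun : (fun T : ℕ => ∑ t ∈ Finset.Icc 1 T, X t ω) =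
      fun T => ∑ j ∈ Finset.range (Nat.count p (T + 1)), X (m j) ω := funext hsum_eq
  rw [hfun]
  exact tendsto_atBot.2 fun b => hcount.eventually (hφ b)
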